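/- Let 0 < q < 1 and a, b, c ∈ ℕ with a, b, c ≥ 1. Then the regularised Schlesinger–Zudilin q-zeta values at negative arguments satisfy ζ_q(-a,-b)·ζ_q(-c) = ζ_q(-c,-a,-b) + ζ_q(-a,-b,-c) + ζ_q(-a,-c,-b) + ζ_q(-a,-b-c) + ζ_q(-a-c,-b). -/

import Mathlib

/-- Regularised Schlesinger–Zudilin `q`-zeta value at negative arguments
`ζ_q(-k₁,…,-kₙ) = ∑_{m₁>⋯>mₙ>0} ∏ⱼ q^{kⱼmⱼ}(1-q^{mⱼ})^{kⱼ}/(1-q)^{kⱼ}`. -/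
noncomputable def Zq (q : ℝ) {n : ℕ} (k : Fin n → ℕ) : ℝ :=
  ∑' m : {m : Fin n → ℕ // (∀ i j : Fin n, i < j → m j < m i) ∧ ∀ i, 0 < m i},
    ∏ j, q ^ (k j * m.1 j) * (1 - q ^ (m.1 j)) ^ (k j) / (1 - q) ^ (k j)

namespace SZaux

noncomputable def r (q : ℝ) (m : ℕ) : ℝ := q ^ m * (1 - q ^ m) / (1 - q)

lemma term_eq (q : ℝ) (k m : ℕ) :
    q ^ (k * m) * (1 - q ^ m) ^ k / (1 - q) ^ k = r q m ^ k := by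
  rw [r, div_pow, mul_pow, pow_mul, pow_right_comm]

variable {q : ℝ}

lemma r_nonneg (hq0 : 0 < q) (hq1 : q < 1) (m : ℕ) : 0 ≤ r q m := by
  have h1 : (0:ℝ) ≤ q ^ m := pow_nonneg hq0.le m
  have h2 : q ^ m ≤ 1 := pow_le_one₀ hq0.le hq1.le
  exact div_nonneg (mul_nonneg h1 (by linarith)) (by linarith)

lemma summable_rk (hq0 : 0 < q) (hq1 : q < 1) (k : ℕ) (hk : 1 ≤ k) :
    Summable fun m : ℕ => r q m ^ k := by
  have hgeo : Summable fun m : ℕ => (q ^ k) ^ m / (1 - q) ^ k :=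
    (summable_geometric_of_lt_one (pow_nonneg hq0.le k)
      (pow_lt_one₀ hq0.le hq1 (by omega))).div_const _
  refine Summable.of_nonneg_of_le (fun m => pow_nonneg (r_nonneg hq0 hq1 m) k)
    (fun m => ?_) hgeo
  have h1 : (0:ℝ) ≤ q ^ m := pow_nonneg hq0.le m
  have h2 : q ^ m ≤ 1 := pow_le_one₀ hq0.le hq1.le
  have hle : r q m ≤ q ^ m / (1 - q) := by
    rw [r]
    apply div_le_div_of_nonneg_right ?_ (by linarith)
    · exact mul_le_of_le_one_right h1 (by linarith)
  calc r q m ^ k ≤ (q ^ m / (1 - q)) ^ k :=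
        pow_le_pow_left₀ (r_nonneg hq0 hq1 m) hle k
    _ = (q ^ k) ^ m / (1 - q) ^ k := by rw [div_pow, ← pow_mul, ← pow_mul, Nat.mul_comm]

lemma cond1_iff (x : ℕ) :
    ((∀ i j : Fin 1, i < j → (![x]) j < (![x]) i) ∧ ∀ i, 0 < (![x]) i) ↔ 0 < x := by
  constructor
  · rintro ⟨-, h2⟩; simpa using h2 0
  · intro h
    refine ⟨fun i j hij => ?_, fun i => ?_⟩
    · rw [Fin.lt_def] at hij; have := i.isLt; have := j.isLt; omega
    · fin_cases i; simpa using h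

lemma cond2_iff (x y : ℕ) :
    ((∀ i j : Fin 2, i < j → (![x, y]) j < (![x, y]) i) ∧ ∀ i, 0 < (![x, y]) i) ↔
      (y < x ∧ 0 < y) := by
  constructor
  · rintro ⟨h1, h2⟩
    refine ⟨by simpa using h1 0 1 (by decide), by simpa using h2 1⟩
  · rintro ⟨hxy, hy⟩
    refine ⟨fun i j hij => ?_, fun i => ?_⟩
    · fin_cases i <;> fin_cases j <;> simp_all [Fin.lt_def]
    · fin_cases i <;> simp <;> omega

lemma cond3_iff (x y z : ℕ) :
    ((∀ i j : Fin 3, i < j → (![x, y, z]) j < (![x, y, z]) i) ∧ ∀ i, 0 < (![x, y, z]) i) ↔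
      (y < x ∧ z < y ∧ 0 < z) := by
  constructor
  · rintro ⟨h1, h2⟩
    refine ⟨by simpa using h1 0 1 (by decide), by simpa using h1 1 2 (by decide),
      by simpa using h2 2⟩
  · rintro ⟨hxy, hyz, hz⟩
    refine ⟨fun i j hij => ?_, fun i => ?_⟩
    · fin_cases i <;> fin_cases j <;> simp_all [Fin.lt_def] <;> omega
    · fin_cases i <;> simp <;> omega

def e1 : ℕ ≃ (Fin 1 → ℕ) where
  toFun x := ![x]
  invFun m := m 0
  left_inv x := rfl
  right_inv m := by funext i; fin_cases i; rfl

def e2 : ℕ × ℕ ≃ (Fin 2 → ℕ) where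
  toFun p := ![p.1, p.2]
  invFun m := (m 0, m 1)
  left_inv p := rfl
  right_inv m := by funext i; fin_cases i <;> rfl

def e3 : ℕ × ℕ × ℕ ≃ (Fin 3 → ℕ) where
  toFun t := ![t.1, t.2.1, t.2.2]
  invFun m := (m 0, m 1, m 2)
  left_inv t := rfl
  right_inv m := by funext i; fin_cases i <;> rfl

lemma Zq_one (q : ℝ) (c : ℕ) :
    Zq q ![c] = ∑' x : ℕ, if 0 < x then r q x ^ c else 0 := by
  rw [Zq]
  refine Eq.trans (tsum_subtype
    {m : Fin 1 → ℕ | (∀ i j : Fin 1, i < j → m j < m i) ∧ ∀ i, 0 < m i}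
    (fun m => ∏ j, q ^ (![c] j * m j) * (1 - q ^ (m j)) ^ (![c] j) / (1 - q) ^ (![c] j))) ?_
  rw [← Equiv.tsum_eq e1]
  refine tsum_congr fun x => ?_
  rw [Set.indicator_apply]
  refine if_congr (cond1_iff x) ?_ rfl
  rw [Fin.prod_univ_one]
  show q ^ (![c] 0 * (![x]) 0) * (1 - q ^ ((![x]) 0)) ^ (![c] 0) / (1 - q) ^ (![c] 0) = _
  simp only [Matrix.cons_val_zero]
  exact term_eq q c x

lemma Zq_two (q : ℝ) (k1 k2 : ℕ) :
    Zq q ![k1, k2] = ∑' p : ℕ × ℕ,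
      if p.2 < p.1 ∧ 0 < p.2 then r q p.1 ^ k1 * r q p.2 ^ k2 else 0 := by
  rw [Zq]
  refine Eq.trans (tsum_subtype
    {m : Fin 2 → ℕ | (∀ i j : Fin 2, i < j → m j < m i) ∧ ∀ i, 0 < m i}
    (fun m => ∏ j, q ^ (![k1, k2] j * m j) * (1 - q ^ (m j)) ^ (![k1, k2] j) / (1 - q) ^ (![k1, k2] j))) ?_
  rw [← Equiv.tsum_eq e2]
  refine tsum_congr fun p => ?_
  rw [Set.indicator_apply]
  refine if_congr (cond2_iff p.1 p.2) ?_ rfl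
  rw [Fin.prod_univ_two]
  simp only [e2, Equiv.coe_fn_mk, Matrix.cons_val_zero, Matrix.cons_val_one, Matrix.head_cons]
  rw [term_eq, term_eq]; rfl

lemma Zq_three (q : ℝ) (k1 k2 k3 : ℕ) :
    Zq q ![k1, k2, k3] = ∑' t : ℕ × ℕ × ℕ,
      if t.2.1 < t.1 ∧ t.2.2 < t.2.1 ∧ 0 < t.2.2 then
        r q t.1 ^ k1 * r q t.2.1 ^ k2 * r q t.2.2 ^ k3 else 0 := by
  rw [Zq]
  refine Eq.trans (tsum_subtype
    {m : Fin 3 → ℕ | (∀ i j : Fin 3, i < j → m j < m i) ∧ ∀ i, 0 < m i}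
    (fun m => ∏ j, q ^ (![k1, k2, k3] j * m j) * (1 - q ^ (m j)) ^ (![k1, k2, k3] j) / (1 - q) ^ (![k1, k2, k3] j))) ?_
  rw [← Equiv.tsum_eq e3]
  refine tsum_congr fun t => ?_
  rw [Set.indicator_apply]
  refine if_congr (cond3_iff t.1 t.2.1 t.2.2) ?_ rfl
  rw [Fin.prod_univ_three]
  simp only [e3, Equiv.coe_fn_mk, Matrix.cons_val_zero, Matrix.cons_val_one, Matrix.head_cons,
    Matrix.cons_val_two, Matrix.tail_cons]
  rw [term_eq, term_eq, term_eq]; rfl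

/-- summability of conditionally-truncated nonnegative functions -/
lemma summable_ite {X : Type*} (v : X → ℝ) (hv : Summable v) (hnn : ∀ x, 0 ≤ v x)
    (C : X → Prop) [DecidablePred C] : Summable fun x => if C x then v x else 0 := by
  refine Summable.of_nonneg_of_le (fun x => ?_) (fun x => ?_) hv
  · split_ifs
    · exact hnn x
    · exact le_rfl
  · split_ifs
    · exact le_rfl
    · exact hnn x

def σ1 : (ℕ × ℕ) × ℕ ≃ ℕ × ℕ × ℕ where
  toFun x := (x.2, x.1.1, x.1.2)
  invFun t := ((t.2.1, t.2.2), t.1)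
  left_inv x := rfl
  right_inv t := rfl

def σ2 : (ℕ × ℕ) × ℕ ≃ ℕ × ℕ × ℕ where
  toFun x := (x.1.1, x.1.2, x.2)
  invFun t := ((t.1, t.2.1), t.2.2)
  left_inv x := rfl
  right_inv t := rfl

def σ3 : (ℕ × ℕ) × ℕ ≃ ℕ × ℕ × ℕ where
  toFun x := (x.1.1, x.2, x.1.2)
  invFun t := ((t.1, t.2.2), t.2.1)
  left_inv x := rfl
  right_inv t := rfl

set_option maxHeartbeats 2000000 in
lemma key (R : ℕ → ℝ) (hR : ∀ m, 0 ≤ R m) (a b c : ℕ)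
    (hsa : Summable fun m : ℕ => R m ^ a) (hsb : Summable fun m : ℕ => R m ^ b)
    (hsc : Summable fun m : ℕ => R m ^ c) :
    (∑' p : ℕ × ℕ, if p.2 < p.1 ∧ 0 < p.2 then R p.1 ^ a * R p.2 ^ b else 0) *
      (∑' x : ℕ, if 0 < x then R x ^ c else 0) =
    (∑' t : ℕ × ℕ × ℕ, if t.2.1 < t.1 ∧ t.2.2 < t.2.1 ∧ 0 < t.2.2 then
        R t.1 ^ c * R t.2.1 ^ a * R t.2.2 ^ b else 0) +
    (∑' t : ℕ × ℕ × ℕ, if t.2.1 < t.1 ∧ t.2.2 < t.2.1 ∧ 0 < t.2.2 then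
        R t.1 ^ a * R t.2.1 ^ b * R t.2.2 ^ c else 0) +
    (∑' t : ℕ × ℕ × ℕ, if t.2.1 < t.1 ∧ t.2.2 < t.2.1 ∧ 0 < t.2.2 then
        R t.1 ^ a * R t.2.1 ^ c * R t.2.2 ^ b else 0) +
    (∑' p : ℕ × ℕ, if p.2 < p.1 ∧ 0 < p.2 then R p.1 ^ a * R p.2 ^ (b + c) else 0) +
    (∑' p : ℕ × ℕ, if p.2 < p.1 ∧ 0 < p.2 then R p.1 ^ (a + c) * R p.2 ^ b else 0) := by
  -- bound function on the master index type
  have h1 : Summable fun p : ℕ × ℕ => R p.1 ^ a * R p.2 ^ b :=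
    Summable.mul_of_nonneg hsa hsb (fun m => pow_nonneg (hR m) a)
      (fun m => pow_nonneg (hR m) b)
  have hvb : Summable fun x : (ℕ × ℕ) × ℕ => (R x.1.1 ^ a * R x.1.2 ^ b) * R x.2 ^ c :=
    Summable.mul_of_nonneg (f := fun p : ℕ × ℕ => R p.1 ^ a * R p.2 ^ b)
      (g := fun n : ℕ => R n ^ c) h1 hsc
      (fun p => mul_nonneg (pow_nonneg (hR p.1) a) (pow_nonneg (hR p.2) b))
      (fun n => pow_nonneg (hR n) c)
  have hvnn : ∀ x : (ℕ × ℕ) × ℕ, 0 ≤ (R x.1.1 ^ a * R x.1.2 ^ b) * R x.2 ^ c := fun x =>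
    mul_nonneg (mul_nonneg (pow_nonneg (hR _) a) (pow_nonneg (hR _) b)) (pow_nonneg (hR _) c)
  -- the five pieces
  have hA1 := summable_ite _ hvb hvnn
    (fun x : (ℕ × ℕ) × ℕ => x.1.2 < x.1.1 ∧ 0 < x.1.2 ∧ x.1.1 < x.2)
  have hA2 := summable_ite _ hvb hvnn
    (fun x : (ℕ × ℕ) × ℕ => x.1.2 < x.1.1 ∧ 0 < x.2 ∧ x.2 < x.1.2)
  have hA3 := summable_ite _ hvb hvnn
    (fun x : (ℕ × ℕ) × ℕ => x.1.2 < x.1.1 ∧ 0 < x.1.2 ∧ x.1.2 < x.2 ∧ x.2 < x.1.1)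
  have hA4 := summable_ite _ hvb hvnn
    (fun x : (ℕ × ℕ) × ℕ => x.1.2 < x.1.1 ∧ 0 < x.1.2 ∧ x.2 = x.1.2)
  have hA5 := summable_ite _ hvb hvnn
    (fun x : (ℕ × ℕ) × ℕ => x.1.2 < x.1.1 ∧ 0 < x.1.2 ∧ x.2 = x.1.1)
  -- summability of the factors
  have hFs : Summable fun p : ℕ × ℕ => if p.2 < p.1 ∧ 0 < p.2 then R p.1 ^ a * R p.2 ^ b else 0 :=
    summable_ite _ (Summable.mul_of_nonneg hsa hsb (fun m => pow_nonneg (hR m) a)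
      (fun m => pow_nonneg (hR m) b))
      (fun p => mul_nonneg (pow_nonneg (hR p.1) a) (pow_nonneg (hR p.2) b)) _
  have hGs : Summable fun x : ℕ => if 0 < x then R x ^ c else 0 :=
    summable_ite _ hsc (fun n => pow_nonneg (hR n) c) _
  have hHs : Summable fun x : (ℕ × ℕ) × ℕ =>
      (if x.1.2 < x.1.1 ∧ 0 < x.1.2 then R x.1.1 ^ a * R x.1.2 ^ b else 0) *
      (if 0 < x.2 then R x.2 ^ c else 0) := by
    refine Summable.mul_of_nonneg
      (f := fun p : ℕ × ℕ => if p.2 < p.1 ∧ 0 < p.2 then R p.1 ^ a * R p.2 ^ b else 0)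
      (g := fun x : ℕ => if 0 < x then R x ^ c else 0) hFs hGs (fun p => ?_) (fun n => ?_)
    · dsimp only; split_ifs
      · exact mul_nonneg (pow_nonneg (hR _) a) (pow_nonneg (hR _) b)
      · exact le_rfl
    · dsimp only; split_ifs
      · exact pow_nonneg (hR _) c
      · exact le_rfl
  rw [Summable.tsum_mul_tsum hFs hGs hHs]
  -- pointwise decomposition
  have hdec : ∀ x : (ℕ × ℕ) × ℕ,
      (if x.1.2 < x.1.1 ∧ 0 < x.1.2 then R x.1.1 ^ a * R x.1.2 ^ b else 0) *
      (if 0 < x.2 then R x.2 ^ c else 0) =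
      (if x.1.2 < x.1.1 ∧ 0 < x.1.2 ∧ x.1.1 < x.2 then (R x.1.1 ^ a * R x.1.2 ^ b) * R x.2 ^ c else 0) +
      ((if x.1.2 < x.1.1 ∧ 0 < x.2 ∧ x.2 < x.1.2 then (R x.1.1 ^ a * R x.1.2 ^ b) * R x.2 ^ c else 0) +
      ((if x.1.2 < x.1.1 ∧ 0 < x.1.2 ∧ x.1.2 < x.2 ∧ x.2 < x.1.1 then (R x.1.1 ^ a * R x.1.2 ^ b) * R x.2 ^ c else 0) +
      ((if x.1.2 < x.1.1 ∧ 0 < x.1.2 ∧ x.2 = x.1.2 then (R x.1.1 ^ a * R x.1.2 ^ b) * R x.2 ^ c else 0) +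
      (if x.1.2 < x.1.1 ∧ 0 < x.1.2 ∧ x.2 = x.1.1 then (R x.1.1 ^ a * R x.1.2 ^ b) * R x.2 ^ c else 0)))) := by
    intro x
    split_ifs <;> (try omega) <;> (try ring)
  rw [tsum_congr hdec, Summable.tsum_add hA1 (hA2.add (hA3.add (hA4.add hA5))),
    Summable.tsum_add hA2 (hA3.add (hA4.add hA5)), Summable.tsum_add hA3 (hA4.add hA5), Summable.tsum_add hA4 hA5]
  -- identify the five pieces
  have hT1 : (∑' x : (ℕ × ℕ) × ℕ, if x.1.2 < x.1.1 ∧ 0 < x.1.2 ∧ x.1.1 < x.2 then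
      (R x.1.1 ^ a * R x.1.2 ^ b) * R x.2 ^ c else 0) =
      ∑' t : ℕ × ℕ × ℕ, if t.2.1 < t.1 ∧ t.2.2 < t.2.1 ∧ 0 < t.2.2 then
        R t.1 ^ c * R t.2.1 ^ a * R t.2.2 ^ b else 0 := by
    rw [← Equiv.tsum_eq σ1 (fun t : ℕ × ℕ × ℕ => if t.2.1 < t.1 ∧ t.2.2 < t.2.1 ∧ 0 < t.2.2 then
        R t.1 ^ c * R t.2.1 ^ a * R t.2.2 ^ b else 0)]
    refine tsum_congr fun x => ?_
    simp only [σ1, Equiv.coe_fn_mk]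
    by_cases h : x.1.2 < x.1.1 ∧ 0 < x.1.2 ∧ x.1.1 < x.2
    · rw [if_pos h]; refine Eq.trans ?_ (if_pos (show x.1.1 < x.2 ∧ x.1.2 < x.1.1 ∧ 0 < x.1.2 from ⟨h.2.2, h.1, h.2.1⟩)).symm; ring
    · rw [if_neg h]; exact (if_neg (show ¬(x.1.1 < x.2 ∧ x.1.2 < x.1.1 ∧ 0 < x.1.2) from fun hh => h ⟨hh.2.1, hh.2.2, hh.1⟩)).symm
  have hT2 : (∑' x : (ℕ × ℕ) × ℕ, if x.1.2 < x.1.1 ∧ 0 < x.2 ∧ x.2 < x.1.2 then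
      (R x.1.1 ^ a * R x.1.2 ^ b) * R x.2 ^ c else 0) =
      ∑' t : ℕ × ℕ × ℕ, if t.2.1 < t.1 ∧ t.2.2 < t.2.1 ∧ 0 < t.2.2 then
        R t.1 ^ a * R t.2.1 ^ b * R t.2.2 ^ c else 0 := by
    rw [← Equiv.tsum_eq σ2 (fun t : ℕ × ℕ × ℕ => if t.2.1 < t.1 ∧ t.2.2 < t.2.1 ∧ 0 < t.2.2 then
        R t.1 ^ a * R t.2.1 ^ b * R t.2.2 ^ c else 0)]
    refine tsum_congr fun x => ?_
    simp only [σ2, Equiv.coe_fn_mk]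
    by_cases h : x.1.2 < x.1.1 ∧ 0 < x.2 ∧ x.2 < x.1.2
    · rw [if_pos h]; refine Eq.trans ?_ (if_pos (show x.1.2 < x.1.1 ∧ x.2 < x.1.2 ∧ 0 < x.2 from ⟨h.1, h.2.2, h.2.1⟩)).symm; try ring
    · rw [if_neg h]; exact (if_neg (show ¬(x.1.2 < x.1.1 ∧ x.2 < x.1.2 ∧ 0 < x.2) from fun hh => h ⟨hh.1, hh.2.2, hh.2.1⟩)).symm
  have hT3 : (∑' x : (ℕ × ℕ) × ℕ, if x.1.2 < x.1.1 ∧ 0 < x.1.2 ∧ x.1.2 < x.2 ∧ x.2 < x.1.1 then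
      (R x.1.1 ^ a * R x.1.2 ^ b) * R x.2 ^ c else 0) =
      ∑' t : ℕ × ℕ × ℕ, if t.2.1 < t.1 ∧ t.2.2 < t.2.1 ∧ 0 < t.2.2 then
        R t.1 ^ a * R t.2.1 ^ c * R t.2.2 ^ b else 0 := by
    rw [← Equiv.tsum_eq σ3 (fun t : ℕ × ℕ × ℕ => if t.2.1 < t.1 ∧ t.2.2 < t.2.1 ∧ 0 < t.2.2 then
        R t.1 ^ a * R t.2.1 ^ c * R t.2.2 ^ b else 0)]
    refine tsum_congr fun x => ?_
    simp only [σ3, Equiv.coe_fn_mk]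
    by_cases h : x.1.2 < x.1.1 ∧ 0 < x.1.2 ∧ x.1.2 < x.2 ∧ x.2 < x.1.1
    · rw [if_pos h]; refine Eq.trans ?_ (if_pos (show x.2 < x.1.1 ∧ x.1.2 < x.2 ∧ 0 < x.1.2 from ⟨h.2.2.2, h.2.2.1, h.2.1⟩)).symm; ring
    · rw [if_neg h]; exact (if_neg (show ¬(x.2 < x.1.1 ∧ x.1.2 < x.2 ∧ 0 < x.1.2) from fun hh => h ⟨by omega, hh.2.2, hh.2.1, hh.1⟩)).symm
  have hT4 : (∑' x : (ℕ × ℕ) × ℕ, if x.1.2 < x.1.1 ∧ 0 < x.1.2 ∧ x.2 = x.1.2 then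
      (R x.1.1 ^ a * R x.1.2 ^ b) * R x.2 ^ c else 0) =
      ∑' p : ℕ × ℕ, if p.2 < p.1 ∧ 0 < p.2 then R p.1 ^ a * R p.2 ^ (b + c) else 0 := by
    have hinj : Function.Injective (fun p : ℕ × ℕ => ((p.1, p.2), p.2)) := by
      intro p p' h
      simp only [Prod.mk.injEq] at h
      exact Prod.ext h.1.1 h.1.2
    rw [← Function.Injective.tsum_eq hinj ?_]
    · refine tsum_congr fun p => ?_
      by_cases h : p.2 < p.1 ∧ 0 < p.2
      · rw [if_pos ⟨h.1, h.2, rfl⟩, if_pos h, pow_add]; ring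
      · rw [if_neg (fun hh => h ⟨hh.1, hh.2.1⟩), if_neg h]
    · intro x hx
      rw [Function.mem_support] at hx
      by_cases h : x.1.2 < x.1.1 ∧ 0 < x.1.2 ∧ x.2 = x.1.2
      · exact ⟨x.1, Prod.ext rfl h.2.2.symm⟩
      · exact absurd (if_neg h) hx
  have hT5 : (∑' x : (ℕ × ℕ) × ℕ, if x.1.2 < x.1.1 ∧ 0 < x.1.2 ∧ x.2 = x.1.1 then
      (R x.1.1 ^ a * R x.1.2 ^ b) * R x.2 ^ c else 0) =
      ∑' p : ℕ × ℕ, if p.2 < p.1 ∧ 0 < p.2 then R p.1 ^ (a + c) * R p.2 ^ b else 0 := by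
    have hinj : Function.Injective (fun p : ℕ × ℕ => ((p.1, p.2), p.1)) := by
      intro p p' h
      simp only [Prod.mk.injEq] at h
      exact Prod.ext h.1.1 h.1.2
    rw [← Function.Injective.tsum_eq hinj ?_]
    · refine tsum_congr fun p => ?_
      by_cases h : p.2 < p.1 ∧ 0 < p.2
      · rw [if_pos ⟨h.1, h.2, rfl⟩, if_pos h, pow_add]; ring
      · rw [if_neg (fun hh => h ⟨hh.1, hh.2.1⟩), if_neg h]
    · intro x hx
      rw [Function.mem_support] at hx
      by_cases h : x.1.2 < x.1.1 ∧ 0 < x.1.2 ∧ x.2 = x.1.1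
      · exact ⟨x.1, Prod.ext rfl h.2.2.symm⟩
      · exact absurd (if_neg h) hx
  rw [hT1, hT2, hT3, hT4, hT5]
  ring

end SZaux

/-- The depth `(2,1)` quasi-shuffle relation
`ζ_q(-a,-b)ζ_q(-c) = ζ_q(-c,-a,-b) + ζ_q(-a,-b,-c) + ζ_q(-a,-c,-b)
  + ζ_q(-a,-b-c) + ζ_q(-a-c,-b)`. -/
theorem SZ_quasiShuffle_21 (q : ℝ) (hq0 : 0 < q) (hq1 : q < 1)
    (a b c : ℕ) (ha : 1 ≤ a) (hb : 1 ≤ b) (hc : 1 ≤ c) :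
    Zq q ![a, b] * Zq q ![c] =
      Zq q ![c, a, b] + Zq q ![a, b, c] + Zq q ![a, c, b] +
      Zq q ![a, b + c] + Zq q ![a + c, b] := by
  rw [SZaux.Zq_two q a b, SZaux.Zq_one q c, SZaux.Zq_three q c a b, SZaux.Zq_three q a b c,
    SZaux.Zq_three q a c b, SZaux.Zq_two q a (b + c), SZaux.Zq_two q (a + c) b]
  exact SZaux.key (SZaux.r q) (SZaux.r_nonneg hq0 hq1) a b c
    (SZaux.summable_rk hq0 hq1 a ha) (SZaux.summable_rk hq0 hq1 b hb)
    (SZaux.summable_rk hq0 hq1 c hc)
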